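/- Let λ1, λ2, λ3, λ4 ∈ M be dominant weights satisfying λ1 + λ2 = λ3 + λ4 and, for every positive root α, |⟨λ1 − λ2, α^∨⟩| ≤ |⟨λ3 − λ4, α^∨⟩|. Assume moreover that both polytopes P_{λ1,λ2} and P_{λ3,λ4} are contained in the closed dominant chamber C_f. Then for every Weyl group element w ∈ W, the point λ3 + w(λ4) lies in the polytope P_{λ1,λ2}. -/

import Mathlib

open Set Module Function

/-- A root system: a root pairing whose roots and coroots span (the old Mathlib structure). -/
structure RootSystem (ι R M N : Type*) [CommRing R] [AddCommGroup M] [Module R M]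
    [AddCommGroup N] [Module R N] extends RootPairing ι R M N where
  span_eq_top : Submodule.span R (range root) = ⊤
  span_eq_top' : Submodule.span R (range coroot) = ⊤

/-- The Weyl group as a subgroup of `M ≃ₗ[R] M` (the old Mathlib definition). -/
def RootSystem.weylGroup {ι R M N : Type*} [CommRing R] [AddCommGroup M] [Module R M]
    [AddCommGroup N] [Module R N] (P : RootSystem ι R M N) : Subgroup (M ≃ₗ[R] M) :=
  Subgroup.closure (range P.reflection)

/-- `b : I → ι` indexes a base of simple roots of the root system `P`: the map is injective,
the simple roots are linearly independent, and every root is either a nonnegative or a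
nonpositive integer combination of the simple roots. -/
structure RootSystem.IsBase {ι M N I : Type*} [Fintype I]
    [AddCommGroup M] [Module ℝ M] [AddCommGroup N] [Module ℝ N]
    (P : RootSystem ι ℝ M N) (b : I → ι) : Prop where
  injective : Function.Injective b
  linearIndependent : LinearIndependent ℝ fun i : I => P.root (b i)
  exists_coeffs : ∀ j : ι,
    (∃ c : I → ℕ, P.root j = ∑ i, (c i : ℝ) • P.root (b i)) ∨
    (∃ c : I → ℕ, P.root j = - ∑ i, (c i : ℝ) • P.root (b i))

/-- The root indexed by `j` is a positive root with respect to the base `b`: it is a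
nonnegative integer combination of the simple roots. -/
def RootSystem.IsPositiveRoot {ι M N I : Type*} [Fintype I]
    [AddCommGroup M] [Module ℝ M] [AddCommGroup N] [Module ℝ N]
    (P : RootSystem ι ℝ M N) (b : I → ι) (j : ι) : Prop :=
  ∃ c : I → ℕ, P.root j = ∑ i, (c i : ℝ) • P.root (b i)

/-- A weight `x ∈ M` is dominant if its pairing with every simple coroot is nonnegative. -/
def RootSystem.IsDominant {ι M N I : Type*}
    [AddCommGroup M] [Module ℝ M] [AddCommGroup N] [Module ℝ N]
    (P : RootSystem ι ℝ M N) (b : I → ι) (x : M) : Prop :=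
  ∀ i : I, 0 ≤ P.coroot' (b i) x

/-- The closed dominant (fundamental) chamber `C_f`. -/
def RootSystem.chamber {ι M N I : Type*}
    [AddCommGroup M] [Module ℝ M] [AddCommGroup N] [Module ℝ N]
    (P : RootSystem ι ℝ M N) (b : I → ι) : Set M :=
  {x : M | P.IsDominant b x}

/-- The polytope `P_{λ,μ}`: the convex hull of the orbit-translate `{λ + w μ : w ∈ W}`. -/
def RootSystem.orbitPolytope {ι M N : Type*}
    [AddCommGroup M] [Module ℝ M] [AddCommGroup N] [Module ℝ N]
    (P : RootSystem ι ℝ M N) (lam mu : M) : Set M :=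
  convexHull ℝ {x : M | ∃ w ∈ P.weylGroup, x = lam + w mu}

lemma RootSystem.reflection_mem_weylGroup {ι M N : Type*}
    [AddCommGroup M] [Module ℝ M] [AddCommGroup N] [Module ℝ N]
    (P : RootSystem ι ℝ M N) (j : ι) : P.reflection j ∈ P.weylGroup :=
  Subgroup.subset_closure ⟨j, rfl⟩

lemma RootSystem.exists_perm_of_mem_weylGroup {ι M N : Type*}
    [AddCommGroup M] [Module ℝ M] [AddCommGroup N] [Module ℝ N]
    (P : RootSystem ι ℝ M N) {w : M ≃ₗ[ℝ] M} (hw : w ∈ P.weylGroup) :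
    ∃ σ : Equiv.Perm ι, ∀ j, P.root (σ j) = w (P.root j) := by
  induction hw using Subgroup.closure_induction with
  | mem x hx =>
    obtain ⟨i, rfl⟩ := hx
    exact ⟨P.reflectionPerm i, fun j => P.root_reflectionPerm i j⟩
  | one => exact ⟨1, fun j => rfl⟩
  | mul x y _ _ ihx ihy =>
    obtain ⟨σ, hσ⟩ := ihx
    obtain ⟨τ, hτ⟩ := ihy
    exact ⟨σ * τ, fun j => by
      rw [Equiv.Perm.mul_apply, hσ, hτ]; rfl⟩
  | inv x _ ihx =>
    obtain ⟨σ, hσ⟩ := ihx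
    refine ⟨σ⁻¹, fun j => ?_⟩
    have h := hσ (σ⁻¹ j)
    rw [show σ (σ⁻¹ j) = j from σ.apply_symm_apply j] at h
    rw [h]
    exact (x.symm_apply_apply _).symm

lemma RootSystem.exists_root_eq_smul_of_mem_weylGroup {ι M N : Type*}
    [AddCommGroup M] [Module ℝ M] [AddCommGroup N] [Module ℝ N]
    (P : RootSystem ι ℝ M N) {w : M ≃ₗ[ℝ] M} (hw : w ∈ P.weylGroup) (j : ι) :
    ∃ j', P.root j' = w • P.root j := by
  obtain ⟨σ, hσ⟩ := P.exists_perm_of_mem_weylGroup hw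
  exact ⟨σ j, hσ j⟩

noncomputable def RootSystem.weylGroupToPerm {ι M N : Type*}
    [AddCommGroup M] [Module ℝ M] [AddCommGroup N] [Module ℝ N]
    (P : RootSystem ι ℝ M N) (w : P.weylGroup) (j : ι) : ι :=
  (P.exists_root_eq_smul_of_mem_weylGroup w.2 j).choose

section SchurAux

open RootPairing Submodule
open scoped Classical

set_option linter.unusedSectionVars false

variable {ι M N I : Type*} [Fintype ι] [Fintype I]
    [AddCommGroup M] [Module ℝ M] [AddCommGroup N] [Module ℝ N]
    (P : RootSystem ι ℝ M N) (b : I → ι)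

/-- The closed cone (over `ℝ≥0`) spanned by the simple roots. -/
def posCone : Set M :=
  {x | ∃ c : I → ℝ, (∀ i, 0 ≤ c i) ∧ x = ∑ i, c i • P.root (b i)}

lemma posCone_zero : (0 : M) ∈ posCone P b :=
  ⟨0, fun _ => le_refl 0, by simp⟩

lemma posCone_add {x y : M} (hx : x ∈ posCone P b) (hy : y ∈ posCone P b) :
    x + y ∈ posCone P b := by
  obtain ⟨c, hc, rfl⟩ := hx
  obtain ⟨d, hd, rfl⟩ := hy
  exact ⟨c + d, fun i => add_nonneg (hc i) (hd i), by
    rw [← Finset.sum_add_distrib]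
    simp [add_smul]⟩

lemma posCone_smul {t : ℝ} (ht : 0 ≤ t) {x : M} (hx : x ∈ posCone P b) :
    t • x ∈ posCone P b := by
  obtain ⟨c, hc, rfl⟩ := hx
  exact ⟨t • c, fun i => mul_nonneg ht (hc i), by
    rw [Finset.smul_sum]
    simp [smul_smul]⟩

/-- Negative root (as index). -/
def IsNegIdx (j : ι) : Prop :=
  ∃ c : I → ℕ, P.root j = - ∑ i, (c i : ℝ) • P.root (b i)

variable {P b}

section WithBase

variable (hb : P.IsBase b)
include hb

/-- Uniqueness of coordinates w.r.t. the simple roots. -/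
lemma coeff_eq {c d : I → ℝ}
    (h : ∑ i, c i • P.root (b i) = ∑ i, d i • P.root (b i)) : c = d := by
  have h0 : ∑ i, (c i - d i) • P.root (b i) = 0 := by
    simp only [sub_smul, Finset.sum_sub_distrib, h, sub_self]
  have h1 := Fintype.linearIndependent_iff.mp hb.linearIndependent (fun i => c i - d i) h0
  funext i
  have h2 := h1 i
  linarith

lemma pos_or_neg (j : ι) : P.IsPositiveRoot b j ∨ IsNegIdx P b j :=
  hb.exists_coeffs j

lemma not_pos_and_neg (j : ι) (h1 : P.IsPositiveRoot b j) (h2 : IsNegIdx P b j) : False := by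
  obtain ⟨c, hc⟩ := h1
  obtain ⟨d, hd⟩ := h2
  have h : ∑ i, ((c i : ℝ) + (d i : ℝ)) • P.root (b i) = ∑ i, (0 : ℝ) • P.root (b i) := by
    simp only [add_smul, Finset.sum_add_distrib]
    rw [← hc, hd]
    simp
  have hcd := coeff_eq hb h
  have hc0 : ∀ i, (c i : ℝ) = 0 := by
    intro i
    have := congrFun hcd i
    have h1' : (0:ℝ) ≤ (c i : ℝ) := Nat.cast_nonneg _
    have h2' : (0:ℝ) ≤ (d i : ℝ) := Nat.cast_nonneg _
    linarith
  have : P.root j = 0 := by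
    rw [hc]
    apply Finset.sum_eq_zero
    intro i _
    rw [hc0 i, zero_smul]
  exact P.ne_zero j this

lemma posIdx_root_mem_posCone {j : ι} (h : P.IsPositiveRoot b j) :
    P.root j ∈ posCone P b := by
  obtain ⟨c, hc⟩ := h
  exact ⟨fun i => (c i : ℝ), fun i => Nat.cast_nonneg _, hc⟩

/-- A root whose vector lies in the positive cone is a positive root. -/
lemma posIdx_of_mem_posCone {j : ι} (h : P.root j ∈ posCone P b) :
    P.IsPositiveRoot b j := by
  rcases pos_or_neg hb j with hp | hn
  · exact hp
  · exfalso
    obtain ⟨c, hc, hx⟩ := h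
    obtain ⟨d, hd⟩ := hn
    have h' : ∑ i, c i • P.root (b i) = ∑ i, (-(d i : ℝ)) • P.root (b i) := by
      rw [← hx, hd]
      simp [Finset.sum_neg_distrib, neg_smul]
    have hcd := coeff_eq hb h'
    have hc0 : ∀ i, c i = 0 := by
      intro i
      have := congrFun hcd i
      have : c i = -(d i : ℝ) := this
      have h2' : (0:ℝ) ≤ (d i : ℝ) := Nat.cast_nonneg _
      linarith [hc i]
    have : P.root j = 0 := by
      rw [hx]
      apply Finset.sum_eq_zero
      intro i _
      rw [hc0 i, zero_smul]
    exact P.ne_zero j this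

omit hb in
lemma simple_coords (i : I) :
    ∑ k, (if k = i then (1:ℝ) else 0) • P.root (b k) = P.root (b i) := by
  rw [Finset.sum_congr rfl (fun k (_ : k ∈ Finset.univ) => by
    rw [ite_smul, zero_smul]
    split_ifs with hk
    · rw [hk]
    · rfl : ∀ k ∈ Finset.univ,
      ((if k = i then (1:ℝ) else 0) • P.root (b k))
        = if k = i then (1:ℝ) • P.root (b i) else 0)]
  simp [Finset.sum_ite_eq']

/-- A positive root is never the negative of a simple root. -/
lemma posIdx_ne_neg_simple {j : ι} (h : P.IsPositiveRoot b j) (i : I)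
    (hji : P.root j = - P.root (b i)) : False := by
  apply not_pos_and_neg hb j h
  refine ⟨fun k => if k = i then 1 else 0, ?_⟩
  rw [hji]
  congr 1
  rw [← simple_coords (P := P) (b := b) i]
  congr 1
  funext k
  by_cases hk : k = i <;> simp [hk]

omit hb in
/-- The simple root `α i` is a positive root. -/
lemma posIdx_simple (i : I) : P.IsPositiveRoot b (b i) := by
  refine ⟨fun k => if k = i then 1 else 0, ?_⟩
  rw [← simple_coords (P := P) (b := b) i]
  congr 1
  funext k
  by_cases hk : k = i <;> simp [hk]

variable (hred : P.IsReduced)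
include hred

/-- The reflection in a simple root permutes the other positive roots. -/
lemma reflection_perm_posIdx {j : ι} (h : P.IsPositiveRoot b j) (i : I) (hji : j ≠ b i) :
    P.IsPositiveRoot b (P.reflectionPerm (b i) j) := by
  obtain ⟨c, hc⟩ := h
  -- there is a coordinate `k ≠ i` with `c k ≠ 0`
  have hex : ∃ k, k ≠ i ∧ c k ≠ 0 := by
    by_contra hno
    push_neg at hno
    have hcc : P.root j = ((c i : ℝ)) • P.root (b i) := by
      rw [hc]
      rw [Finset.sum_eq_single i]
      · intro k _ hk
        rw [hno k hk, Nat.cast_zero, zero_smul]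
      · intro hk; exact absurd (Finset.mem_univ i) hk
    have hdep : ¬ LinearIndependent ℝ ![P.root j, P.root (b i)] := by
      intro hli
      have h2 := hli.eq_zero_of_pair (s := 1) (t := -(c i : ℝ)) (by
        rw [hcc]; ring_nf; rw [one_smul, neg_smul]; abel)
      simpa using h2.1
    rcases hred.eq_or_eq_neg j (b i) hdep with heq | hneg
    · exact hji (P.root.injective heq)
    · exact posIdx_ne_neg_simple hb ⟨c, hc⟩ i hneg
  obtain ⟨k, hki, hck⟩ := hex
  -- coordinates of the reflected root
  have hrefl : P.root (P.reflectionPerm (b i) j)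
      = ∑ l, (((c l : ℝ) - if l = i then P.pairing j (b i) else 0)) • P.root (b l) := by
    rw [P.root_reflectionPerm, P.reflection_apply_root]
    rw [hc]
    rw [Finset.sum_congr rfl (fun l _ => sub_smul _ _ _), Finset.sum_sub_distrib]
    congr 1
    rw [Finset.sum_congr rfl (fun l (_ : l ∈ Finset.univ) => by
      rw [ite_smul, zero_smul]
      split_ifs with hl
      · rw [hl]
      · rfl : ∀ l ∈ Finset.univ,
        ((if l = i then P.pairing j (b i) else 0) • P.root (b l))
          = if l = i then P.pairing j (b i) • P.root (b i) else 0)]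
    · simp [Finset.sum_ite_eq']
  rcases pos_or_neg hb (P.reflectionPerm (b i) j) with hp | hn
  · exact hp
  · exfalso
    obtain ⟨d, hd⟩ := hn
    have h' : ∑ l, (((c l : ℝ) - if l = i then P.pairing j (b i) else 0)) • P.root (b l)
        = ∑ l, (-(d l : ℝ)) • P.root (b l) := by
      rw [← hrefl, hd]
      simp [neg_smul]
    have hcd := coeff_eq hb h'
    have := congrFun hcd k
    simp only [if_neg hki] at this
    have h1' : (0:ℝ) < (c k : ℝ) := by
      have := Nat.pos_of_ne_zero hck
      exact_mod_cast this
    have h2' : (0:ℝ) ≤ (d k : ℝ) := Nat.cast_nonneg _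
    rw [sub_zero] at this
    linarith

omit hb hred in
/-- Images of roots under Weyl group elements are roots. -/
lemma weyl_root_image {w : M ≃ₗ[ℝ] M} (hw : w ∈ P.weylGroup) (j : ι) :
    ∃ j', P.root j' = w (P.root j) := by
  obtain ⟨j', hj'⟩ := P.exists_root_eq_smul_of_mem_weylGroup hw j
  exact ⟨j', by rw [hj', LinearEquiv.smul_def]⟩

omit hb hred in
/-- Conjugation formula for reflections. -/
lemma reflection_conj {w : M ≃ₗ[ℝ] M} (hw : w ∈ P.weylGroup) {j j' : ι}
    (hjj : w (P.root j) = P.root j') :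
    P.reflection j' = w * P.reflection j * w⁻¹ := by
  have hx : P.root j' ≠ 0 := P.ne_zero j'
  have hfin : (Set.range P.root).Finite := Set.finite_range _
  have hspan : span ℝ (Set.range P.root) = ⊤ := P.span_eq_top
  set f : Module.Dual ℝ M := P.coroot' j' with hf
  set g : Module.Dual ℝ M := (P.coroot' j).comp (w.symm : M →ₗ[ℝ] M) with hg
  have hwinv : w.symm (P.root j') = P.root j := by
    rw [← hjj, LinearEquiv.symm_apply_apply]
  have hf₁ : f (P.root j') = 2 := by
    rw [hf]; rw [P.root_coroot'_eq_pairing]; exact P.pairing_same j'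
  have hg₁ : g (P.root j') = 2 := by
    rw [hg]
    simp only [LinearMap.comp_apply, LinearEquiv.coe_coe]
    rw [hwinv, P.root_coroot'_eq_pairing]
    exact P.pairing_same j
  have hfr : ∀ y : M, Module.preReflection (P.root j') f y = P.reflection j' y := by
    intro y; rw [Module.preReflection_apply, P.reflection_apply]
  have hgr : ∀ y : M, Module.preReflection (P.root j') g y = w (P.reflection j (w.symm y)) := by
    intro y
    rw [Module.preReflection_apply, P.reflection_apply]
    rw [map_sub, map_smul, LinearEquiv.apply_symm_apply, hjj]
    rfl
  have hf₂ : MapsTo (Module.preReflection (P.root j') f) (Set.range P.root)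
      (Set.range P.root) := by
    intro y hy
    obtain ⟨m, rfl⟩ := hy
    rw [hfr]
    exact ⟨P.reflectionPerm j' m, P.root_reflectionPerm j' m⟩
  have hg₂ : MapsTo (Module.preReflection (P.root j') g) (Set.range P.root)
      (Set.range P.root) := by
    intro y hy
    obtain ⟨m, rfl⟩ := hy
    rw [hgr]
    obtain ⟨m₁, hm₁⟩ := weyl_root_image (P := P) ((Subgroup.inv_mem_iff _).mpr hw) m
    have hm₁' : w.symm (P.root m) = P.root m₁ := by rw [hm₁]; rfl
    rw [hm₁', ← P.root_reflectionPerm j m₁]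
    obtain ⟨m₂, hm₂⟩ := weyl_root_image (P := P) hw (P.reflectionPerm j m₁)
    rw [← hm₂]
    exact ⟨m₂, rfl⟩
  have hfg : f = g :=
    Module.Dual.eq_of_preReflection_mapsTo hfin hspan hf₁ hf₂ hg₁ hg₂
  ext y
  have h1 : P.reflection j' y = y - f y • P.root j' := P.reflection_apply j' y
  have h2 : (w * P.reflection j * w⁻¹) y = w (P.reflection j (w.symm y)) := rfl
  rw [h2, ← hgr y, ← hfg, hfr y]

/-- Sum of all positive roots. -/
noncomputable def posRootSum (P : RootSystem ι ℝ M N) (b : I → ι) : M :=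
  ∑ j ∈ Finset.univ.filter (fun j => P.IsPositiveRoot b j), P.root j

lemma reflection_posRootSum (i : I) :
    P.reflection (b i) (posRootSum P b) = posRootSum P b - (2:ℝ) • P.root (b i) := by
  classical
  set T : Finset ι := Finset.univ.filter (fun j => P.IsPositiveRoot b j) with hT
  set ρ : Equiv.Perm ι := P.reflectionPerm (b i) with hρ
  have hbiT : b i ∈ T := by
    rw [hT]; exact Finset.mem_filter.mpr ⟨Finset.mem_univ _, posIdx_simple i⟩
  have hroot_neg : P.root (ρ (b i)) = - P.root (b i) := by
    rw [hρ, P.root_reflectionPerm, P.reflection_apply_self]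
  have himg : (T.erase (b i)).image ρ = T.erase (b i) := by
    apply Finset.eq_of_subset_of_card_le
    · intro x hx
      obtain ⟨j, hj, rfl⟩ := Finset.mem_image.mp hx
      have hjT := (Finset.mem_erase.mp hj).2
      have hjne := (Finset.mem_erase.mp hj).1
      have hjpos : P.IsPositiveRoot b j := (Finset.mem_filter.mp hjT).2
      refine Finset.mem_erase.mpr ⟨?_, Finset.mem_filter.mpr ⟨Finset.mem_univ _, ?_⟩⟩
      · intro hcon
        have : j = ρ (b i) := by
          rw [← hcon]; rw [hρ]; rw [P.reflectionPerm_self]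
        rw [this] at hjpos
        exact posIdx_ne_neg_simple hb hjpos i hroot_neg
      · exact reflection_perm_posIdx hb hred hjpos i hjne
    · rw [Finset.card_image_of_injective _ ρ.injective]
  have hρbi_not : ρ (b i) ∉ T.erase (b i) := by
    intro hcon
    have hpos : P.IsPositiveRoot b (ρ (b i)) :=
      (Finset.mem_filter.mp (Finset.mem_erase.mp hcon).2).2
    exact posIdx_ne_neg_simple hb hpos i hroot_neg
  have hsum : P.reflection (b i) (posRootSum P b) = ∑ j ∈ T.image ρ, P.root j := by
    rw [posRootSum, ← hT, map_sum, Finset.sum_image (fun x _ y _ h => ρ.injective h)]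
    apply Finset.sum_congr rfl
    intro j _
    rw [hρ, P.root_reflectionPerm]
  have hTsplit : T.image ρ = insert (ρ (b i)) (T.erase (b i)) := by
    have : T = insert (b i) (T.erase (b i)) := (Finset.insert_erase hbiT).symm
    rw [this, Finset.image_insert, Finset.insert_erase hbiT, himg]
  rw [hsum, hTsplit, Finset.sum_insert hρbi_not, hroot_neg]
  have : ∑ j ∈ T.erase (b i), P.root j = posRootSum P b - P.root (b i) := by
    rw [posRootSum, ← hT, ← Finset.add_sum_erase T P.root hbiT]
    abel
  rw [this]
  rw [two_smul]
  abel

lemma coroot'_posRootSum (i : I) :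
    P.coroot' (b i) (posRootSum P b) = 2 := by
  have h1 := reflection_posRootSum hb hred i
  rw [P.reflection_apply] at h1
  have h2 : P.coroot' (b i) (posRootSum P b) • P.root (b i) = (2:ℝ) • P.root (b i) :=
    sub_right_inj.mp h1
  have h3 : (P.coroot' (b i) (posRootSum P b) - 2) • P.root (b i) = 0 := by
    rw [sub_smul, h2, sub_self]
  rcases smul_eq_zero.mp h3 with h | h
  · exact sub_eq_zero.mp h
  · exact absurd h (P.ne_zero (b i))

variable (hcrys : P.IsCrystallographic)

/-- The subgroup generated by the simple reflections. -/
def simpleRefl (P : RootSystem ι ℝ M N) (b : I → ι) : Subgroup (M ≃ₗ[ℝ] M) :=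
  Subgroup.closure (Set.range fun i : I => P.reflection (b i))

include hcrys in
/-- Every reflection in a positive root of bounded height lies in the subgroup generated by
the simple reflections. -/
lemma reflection_mem_simpleRefl_of_height (n : ℕ) :
    ∀ (j : ι) (c : I → ℕ), P.root j = ∑ i, (c i : ℝ) • P.root (b i) →
      ∑ i, c i ≤ n → P.reflection j ∈ simpleRefl P b := by
  induction n with
  | zero =>
    intro j c hc hn
    exfalso
    have hc0 : ∀ i, c i = 0 := by
      intro i
      have := Finset.sum_eq_zero_iff.mp (Nat.le_zero.mp hn)
      exact this i (Finset.mem_univ i)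
    apply P.ne_zero j
    rw [hc]
    apply Finset.sum_eq_zero
    intro i _
    rw [hc0 i, Nat.cast_zero, zero_smul]
  | succ n ih =>
    intro j c hc hn
    -- find a simple root pairing positively with `j`
    have h2 : (2:ℝ) = ∑ i, (c i : ℝ) * P.pairing (b i) j := by
      have := P.pairing_same j
      rw [← this]
      rw [← P.root_coroot'_eq_pairing]
      nth_rewrite 1 [hc]
      rw [map_sum]
      apply Finset.sum_congr rfl
      intro i _
      rw [map_smul, P.root_coroot'_eq_pairing]
      rfl
    have hex : ∃ i, 0 < (c i : ℝ) * P.pairing (b i) j := by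
      by_contra hno
      push_neg at hno
      have : ∑ i, (c i : ℝ) * P.pairing (b i) j ≤ 0 :=
        Finset.sum_nonpos (fun i _ => hno i)
      rw [← h2] at this
      linarith
    obtain ⟨i, hi⟩ := hex
    have hpi : 0 < P.pairing (b i) j := by
      rcases lt_or_ge 0 (P.pairing (b i) j) with h | h
      · exact h
      · exfalso
        have hci : (0:ℝ) ≤ (c i : ℝ) := Nat.cast_nonneg _
        nlinarith
    have hpj : 0 < P.pairing j (b i) :=
      by
        have hpp : ∀ a a' : ι, P.pairingIn ℝ a a' = P.pairing a a' := fun a a' => by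
          simpa using P.algebraMap_pairingIn ℝ a a'
        have := (P.zero_lt_pairingIn_iff' ℝ (i := b i) (j := j)).mp (by rw [hpp]; exact hpi)
        rwa [hpp] at this
    by_cases hji : j = b i
    · rw [hji]
      exact Subgroup.subset_closure ⟨i, rfl⟩
    -- reflect to get a smaller positive root
    obtain ⟨z, hz⟩ := hcrys.exists_value j (b i)
    rw [algebraMap_int_eq, eq_intCast] at hz
    have hz1 : 1 ≤ z := by
      have : (0:ℝ) < z := by rw [hz]; exact hpj
      exact_mod_cast this
    set j' : ι := P.reflectionPerm (b i) j with hj'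
    have hj'pos : P.IsPositiveRoot b j' := reflection_perm_posIdx hb hred ⟨c, hc⟩ i hji
    obtain ⟨d, hd⟩ := hj'pos
    -- coordinates of the reflected root
    have hrefl : P.root j' = ∑ l, (((c l : ℝ) - if l = i then (z:ℝ) else 0)) • P.root (b l) := by
      rw [hj', P.root_reflectionPerm, P.reflection_apply_root, ← hz]
      rw [hc]
      rw [Finset.sum_congr rfl (fun l (_ : l ∈ Finset.univ) => sub_smul _ _ _),
        Finset.sum_sub_distrib]
      congr 1
      rw [Finset.sum_congr rfl (fun l (_ : l ∈ Finset.univ) => by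
        rw [ite_smul, zero_smul]
        split_ifs with hl
        · rw [hl]
        · rfl : ∀ l ∈ Finset.univ,
          ((if l = i then (z:ℝ) else 0) • P.root (b l))
            = if l = i then (z:ℝ) • P.root (b i) else 0)]
      simp [Finset.sum_ite_eq']
    have hcd : ∀ l, (d l : ℝ) = (c l : ℝ) - if l = i then (z:ℝ) else 0 := by
      intro l
      have := coeff_eq hb (hd.symm.trans hrefl)
      exact congrFun this l
    have hsum_d : ∑ l, d l ≤ n := by
      have hr : (∑ l, (d l : ℝ)) = (∑ l, (c l : ℝ)) - z := by
        rw [Finset.sum_congr rfl (fun l (_ : l ∈ Finset.univ) => hcd l),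
          Finset.sum_sub_distrib]
        congr 1
        simp [Finset.sum_ite_eq']
      have hc_le : (∑ l, (c l : ℝ)) ≤ (n:ℝ) + 1 := by
        have : ((∑ l, c l : ℕ) : ℝ) ≤ ((n+1 : ℕ) : ℝ) := by exact_mod_cast hn
        rw [Nat.cast_sum] at this
        push_cast at this ⊢
        linarith
      have : (∑ l, (d l : ℝ)) ≤ (n:ℝ) := by
        rw [hr]
        have : (1:ℝ) ≤ (z:ℝ) := by exact_mod_cast hz1
        linarith
      have h' : ((∑ l, d l : ℕ) : ℝ) ≤ (n:ℝ) := by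
        rw [Nat.cast_sum]; exact this
      exact_mod_cast h'
    have hj'mem : P.reflection j' ∈ simpleRefl P b := ih j' d hd hsum_d
    have hco : P.reflection (b i) (P.root j') = P.root j := by
      rw [hj', P.root_reflectionPerm, P.reflection_same]
    have hconj := reflection_conj (P := P)
      (P.reflection_mem_weylGroup (b i)) hco
    rw [hconj]
    have hsi : P.reflection (b i) ∈ simpleRefl P b := Subgroup.subset_closure ⟨i, rfl⟩
    exact Subgroup.mul_mem _ (Subgroup.mul_mem _ hsi hj'mem) (Subgroup.inv_mem _ hsi)

omit hb hred in
/-- Reflection in the "negative" of a root agrees with the original reflection. -/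
lemma reflection_neg_eq (j : ι) :
    P.reflection (P.reflectionPerm j j) = P.reflection j := by
  ext y
  have hroot : P.root (P.reflectionPerm j j) = - P.root j := by
    rw [P.root_reflectionPerm, P.reflection_apply_self]
  have hcoroot : P.coroot (P.reflectionPerm j j) = - P.coroot j := by
    rw [P.coroot_reflectionPerm, P.coreflection_apply_self]
  have h4 : P.coroot' (P.reflectionPerm j j) y = - P.coroot' j y := by
    show P.toLinearMap y (P.coroot (P.reflectionPerm j j))
      = - P.toLinearMap y (P.coroot j)
    rw [hcoroot, map_neg]
  rw [P.reflection_apply, P.reflection_apply, hroot, h4, smul_neg, neg_smul, neg_neg]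

include hcrys in
lemma weylGroup_le_simpleRefl : P.weylGroup ≤ simpleRefl P b := by
  rw [RootSystem.weylGroup]
  apply (Subgroup.closure_le _).mpr
  rintro - ⟨j, rfl⟩
  rcases pos_or_neg hb j with hp | hn
  · obtain ⟨c, hc⟩ := hp
    exact reflection_mem_simpleRefl_of_height hb hred hcrys (∑ i, c i) j c hc le_rfl
  · obtain ⟨c, hc⟩ := hn
    have hpos : P.root (P.reflectionPerm j j) = ∑ i, (c i : ℝ) • P.root (b i) := by
      rw [P.root_reflectionPerm, P.reflection_apply_self, hc, neg_neg]
    rw [← reflection_neg_eq (P := P) j]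
    exact reflection_mem_simpleRefl_of_height hb hred hcrys (∑ i, c i)
      (P.reflectionPerm j j) c hpos le_rfl

/-- Products of simple reflections along a word. -/
def sWord (P : RootSystem ι ℝ M N) (b : I → ι) (l : List I) : M ≃ₗ[ℝ] M :=
  (l.map fun i => P.reflection (b i)).prod

omit hb hred in
lemma sWord_nil : sWord P b [] = 1 := rfl

omit hb hred in
lemma sWord_singleton (i : I) : sWord P b [i] = P.reflection (b i) := by
  simp [sWord]

omit hb hred in
lemma sWord_cons (i : I) (l : List I) :
    sWord P b (i :: l) = P.reflection (b i) * sWord P b l := by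
  rw [sWord, List.map_cons, List.prod_cons]; rfl

omit hb hred in
lemma sWord_append (l₁ l₂ : List I) :
    sWord P b (l₁ ++ l₂) = sWord P b l₁ * sWord P b l₂ := by
  rw [sWord, List.map_append, List.prod_append]; rfl

omit hb hred in
lemma sWord_mem_weylGroup (l : List I) : sWord P b l ∈ P.weylGroup := by
  apply Subgroup.list_prod_mem
  intro x hx
  obtain ⟨i, _, rfl⟩ := List.mem_map.mp hx
  exact P.reflection_mem_weylGroup (b i)

omit hb hred in
lemma sWord_inv (l : List I) : (sWord P b l)⁻¹ = sWord P b l.reverse := by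
  induction l with
  | nil => simp [sWord]
  | cons i t ih =>
    rw [sWord_cons, mul_inv_rev, ih, List.reverse_cons, sWord_append, P.reflection_inv,
      sWord_singleton]

omit hb hred in
lemma exists_sWord {u : M ≃ₗ[ℝ] M} (hu : u ∈ simpleRefl P b) :
    ∃ l : List I, u = sWord P b l := by
  induction hu using Subgroup.closure_induction with
  | mem x hx =>
    obtain ⟨i, rfl⟩ := hx
    exact ⟨[i], (sWord_singleton (P := P) (b := b) i).symm⟩
  | one => exact ⟨[], rfl⟩
  | mul x y hx hy ihx ihy =>
    obtain ⟨lx, rfl⟩ := ihx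
    obtain ⟨ly, rfl⟩ := ihy
    exact ⟨lx ++ ly, (sWord_append (P := P) (b := b) lx ly).symm⟩
  | inv x hx ihx =>
    obtain ⟨lx, rfl⟩ := ihx
    exact ⟨lx.reverse, sWord_inv (P := P) (b := b) lx⟩

/-- Strong exchange: if a word makes a simple root negative, the word times that simple
reflection is expressible by a shorter word. -/
lemma strong_exchange :
    ∀ (l : List I) (i : I), (sWord P b l) (P.root (b i)) ∉ posCone P b →
      ∃ l' : List I, l'.length + 1 = l.length ∧
        sWord P b l' = sWord P b l * P.reflection (b i) := by
  intro l
  induction l with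
  | nil =>
    intro i hneg
    exfalso
    apply hneg
    rw [sWord_nil]
    have := posIdx_root_mem_posCone hb (posIdx_simple (P := P) (b := b) i)
    simpa using this
  | cons i₁ t ih =>
    intro i hneg
    set v' := sWord P b t with hv'
    by_cases hx : v' (P.root (b i)) ∈ posCone P b
    · obtain ⟨m, hm⟩ := weyl_root_image (P := P)
        (sWord_mem_weylGroup (P := P) (b := b) t) (b i)
      have hmpos : P.IsPositiveRoot b m := by
        apply posIdx_of_mem_posCone hb
        rw [hm]
        exact hx
      by_cases hmi : m = b i₁
      · -- conjugation collapses the word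
        have hco : v' (P.root (b i)) = P.root (b i₁) := by rw [← hm, hmi]
        have hconj := reflection_conj (P := P)
          (sWord_mem_weylGroup (P := P) (b := b) t) hco
        refine ⟨t, by simp, ?_⟩
        rw [sWord_cons, ← hv', hconj]
        have hss : P.reflection (b i) * P.reflection (b i) = 1 := by
          nth_rewrite 2 [← P.reflection_inv]
          group
        rw [hv']
        symm
        calc sWord P b t * P.reflection (b i) * (sWord P b t)⁻¹ * (sWord P b t * P.reflection (b i))
            = sWord P b t * (P.reflection (b i) * P.reflection (b i)) := by group
          _ = sWord P b t := by rw [hss, mul_one]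
      · exfalso
        apply hneg
        rw [sWord_cons, ← hv']
        have : (P.reflection (b i₁) * v') (P.root (b i)) =
            P.reflection (b i₁) (v' (P.root (b i))) := rfl
        rw [this, ← hm, ← P.root_reflectionPerm]
        exact posIdx_root_mem_posCone hb (reflection_perm_posIdx hb hred hmpos i₁ hmi)
    · obtain ⟨r, hrlen, hr⟩ := ih i hx
      refine ⟨i₁ :: r, by simp [← hrlen], ?_⟩
      rw [sWord_cons, sWord_cons, ← hv', hr]
      group

/-- KEY LEMMA: for dominant `y` and any `u` in the subgroup generated by simple reflections,
`y - u y` is a nonnegative combination of simple roots. -/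
lemma dominant_sub_orbit_mem_posCone :
    ∀ (n : ℕ) (l : List I), l.length ≤ n → ∀ y : M,
      (∀ i, 0 ≤ P.coroot' (b i) y) → y - (sWord P b l) y ∈ posCone P b := by
  intro n
  induction n with
  | zero =>
    intro l hl y hy
    rw [List.length_eq_zero_iff.mp (Nat.le_zero.mp hl), sWord_nil]
    have : (1 : M ≃ₗ[ℝ] M) y = y := rfl
    rw [this, sub_self]
    exact posCone_zero P b
  | succ n ih =>
    intro l hl y hy
    rcases List.eq_nil_or_concat l with rfl | ⟨l', i, rfl⟩
    · rw [sWord_nil]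
      have : (1 : M ≃ₗ[ℝ] M) y = y := rfl
      rw [this, sub_self]
      exact posCone_zero P b
    · simp only [List.concat_eq_append] at hl ⊢
      have hlen' : l'.length + 1 = (l' ++ [i]).length := by simp
      set v := sWord P b l' with hv
      have happ : sWord P b (l' ++ [i]) = v * P.reflection (b i) := by
        rw [sWord_append, sWord_singleton, hv]
      have hc : 0 ≤ P.coroot' (b i) y := hy i
      have huy : (sWord P b (l' ++ [i])) y = v y - P.coroot' (b i) y • v (P.root (b i)) := by
        rw [happ]
        have : (v * P.reflection (b i)) y = v (P.reflection (b i) y) := rfl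
        rw [this, P.reflection_apply, map_sub, map_smul]
      by_cases hvα : v (P.root (b i)) ∈ posCone P b
      · have h1 : y - (sWord P b (l' ++ [i])) y
            = (y - v y) + P.coroot' (b i) y • v (P.root (b i)) := by
          rw [huy]; abel
        rw [h1]
        have hlenl' : l'.length ≤ n := by
          have : l'.length + 1 ≤ n + 1 := by simpa using hl
          omega
        exact posCone_add (P := P) (b := b) (ih l' hlenl' y hy)
          (posCone_smul (P := P) (b := b) hc hvα)
      · obtain ⟨l'', hl''len, hl''⟩ := strong_exchange hb hred l' i hvα
        have : sWord P b l'' = sWord P b (l' ++ [i]) := by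
          rw [hl'', happ]
        rw [← this]
        have hlen2 : l''.length ≤ n := by
          have h5 : l'.length + 1 ≤ n + 1 := by simpa using hl
          omega
        exact ih l'' hlen2 y hy

omit hb hred in
lemma finite_weylGroup : Finite P.weylGroup := by
  have hinj : Function.Injective (fun w : P.weylGroup => P.weylGroupToPerm w) := by
    intro w w' h
    have hval : ∀ j : ι, (w : M ≃ₗ[ℝ] M) (P.root j) = (w' : M ≃ₗ[ℝ] M) (P.root j) := by
      intro j
      have h1 : P.root ((P.weylGroupToPerm w) j) = (w : M ≃ₗ[ℝ] M) • P.root j :=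
        (P.exists_root_eq_smul_of_mem_weylGroup w.2 j).choose_spec
      have h2 : P.root ((P.weylGroupToPerm w') j) = (w' : M ≃ₗ[ℝ] M) • P.root j :=
        (P.exists_root_eq_smul_of_mem_weylGroup w'.2 j).choose_spec
      simp only at h
      rw [h] at h1
      rw [h1] at h2
      rw [← LinearEquiv.smul_def, ← LinearEquiv.smul_def]
      exact h2
    apply Subtype.ext
    apply LinearEquiv.toLinearMap_injective
    apply LinearMap.ext_on P.span_eq_top
    rintro x ⟨j, rfl⟩
    exact hval j
  exact Finite.of_injective _ hinj

include hb hred in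
lemma exists_dominant_translate (F : M →ₗ[ℝ] ℝ) :
    ∃ u : M ≃ₗ[ℝ] M, u ∈ P.weylGroup ∧ ∀ i, 0 ≤ F (u (P.root (b i))) := by
  haveI := finite_weylGroup (P := P)
  haveI : Nonempty P.weylGroup := ⟨1⟩
  obtain ⟨u, hu⟩ :=
    Finite.exists_max (fun w : P.weylGroup => F ((w : M ≃ₗ[ℝ] M) (posRootSum P b)))
  refine ⟨(u : M ≃ₗ[ℝ] M), u.2, fun i => ?_⟩
  have hle := hu ⟨(u : M ≃ₗ[ℝ] M) * P.reflection (b i),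
    mul_mem u.2 (P.reflection_mem_weylGroup (b i))⟩
  have hs : ((u : M ≃ₗ[ℝ] M) * P.reflection (b i)) (posRootSum P b)
      = (u : M ≃ₗ[ℝ] M) (posRootSum P b) - (2:ℝ) • (u : M ≃ₗ[ℝ] M) (P.root (b i)) := by
    have h0 : ((u : M ≃ₗ[ℝ] M) * P.reflection (b i)) (posRootSum P b)
        = (u : M ≃ₗ[ℝ] M) (P.reflection (b i) (posRootSum P b)) := rfl
    rw [h0, reflection_posRootSum hb hred i, map_sub, map_smul]
  simp only at hle
  rw [hs, map_sub, map_smul, smul_eq_mul] at hle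
  linarith

omit hred in
lemma nonneg_on_posCone (F : M →ₗ[ℝ] ℝ) (hF : ∀ i, 0 ≤ F (P.root (b i))) {x : M}
    (hx : x ∈ posCone P b) : 0 ≤ F x := by
  obtain ⟨c, hc, rfl⟩ := hx
  rw [map_sum]
  apply Finset.sum_nonneg
  intro i _
  rw [map_smul, smul_eq_mul]
  exact mul_nonneg (hc i) (hF i)

include hcrys in
/-- The master inequality: for any dominant (w.r.t. coroot pairings) `y`, any Weyl element `v`,
and `u₀` chosen so that `F ∘ u₀` is nonnegative on simple roots, `F (v y) ≤ F (u₀ y)`. -/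
lemma key_estimate (F : M →ₗ[ℝ] ℝ) {u₀ : M ≃ₗ[ℝ] M} (hu₀mem : u₀ ∈ P.weylGroup)
    (hu₀ : ∀ i, 0 ≤ F (u₀ (P.root (b i))))
    {v : M ≃ₗ[ℝ] M} (hv : v ∈ P.weylGroup) {y : M} (hy : ∀ i, 0 ≤ P.coroot' (b i) y) :
    F (v y) ≤ F (u₀ y) := by
  have hv' : u₀⁻¹ * v ∈ P.weylGroup := mul_mem (inv_mem hu₀mem) hv
  obtain ⟨l, hl⟩ := exists_sWord (P := P) (weylGroup_le_simpleRefl hb hred hcrys hv')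
  have hmem := dominant_sub_orbit_mem_posCone hb hred l.length l le_rfl y hy
  rw [← hl] at hmem
  have hGpos : 0 ≤ F (u₀ (y - (u₀⁻¹ * v) y)) := by
    apply nonneg_on_posCone hb (F.comp u₀.toLinearMap) _ hmem
    intro i
    simpa using hu₀ i
  have hco : u₀ ((u₀⁻¹ * v) y) = v y := by
    have h7 : (u₀ * (u₀⁻¹ * v)) y = u₀ ((u₀⁻¹ * v) y) := rfl
    rw [← h7]
    congr 1
    group
  rw [map_sub, map_sub, hco] at hGpos
  linarith

end WithBase

end SchurAux

/-- under hypothesis (*) and deep dominance, every vertex `λ3 + w(λ4)` lies in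
the polytope `P_{λ1,λ2}`. -/
theorem schur_vertex_mem {ι M N I : Type*} [Fintype ι] [Fintype I]
    [AddCommGroup M] [Module ℝ M] [AddCommGroup N] [Module ℝ N]
    (P : RootSystem ι ℝ M N) (hcrys : P.IsCrystallographic) (hred : P.IsReduced)
    (b : I → ι) (hb : P.IsBase b)
    (lam1 lam2 lam3 lam4 : M)
    (h1 : P.IsDominant b lam1) (h2 : P.IsDominant b lam2)
    (h3 : P.IsDominant b lam3) (h4 : P.IsDominant b lam4)
    (hsum : lam1 + lam2 = lam3 + lam4)
    (hineq : ∀ j : ι, P.IsPositiveRoot b j →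
      |P.coroot' j (lam1 - lam2)| ≤ |P.coroot' j (lam3 - lam4)|)
    (hP12 : P.orbitPolytope lam1 lam2 ⊆ P.chamber b)
    (hP34 : P.orbitPolytope lam3 lam4 ⊆ P.chamber b) :
    ∀ w : M ≃ₗ[ℝ] M, w ∈ P.weylGroup → lam3 + w lam4 ∈ P.orbitPolytope lam1 lam2 := by
  classical
  intro w hw
  -- membership of generators in the polytopes gives dominance facts
  have hdom12 : ∀ u, u ∈ P.weylGroup → P.IsDominant b (lam1 + u lam2) :=
    fun u hu => hP12 (subset_convexHull ℝ _ ⟨u, hu, rfl⟩)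
  have hdom34 : ∀ u, u ∈ P.weylGroup → P.IsDominant b (lam3 + u lam4) :=
    fun u hu => hP34 (subset_convexHull ℝ _ ⟨u, hu, rfl⟩)
  have pair2 : ∀ i : I, P.coroot' (b i) (P.root (b i)) = 2 := fun i => by
    rw [P.root_coroot'_eq_pairing, P.pairing_same]
  have hd12 : ∀ i : I, 0 ≤ P.coroot' (b i) (lam1 - lam2) := by
    intro i
    have h := hdom12 (P.reflection (b i)) (P.reflection_mem_weylGroup (b i)) i
    rw [map_add, P.reflection_apply, map_sub, map_smul, pair2 i, smul_eq_mul] at h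
    rw [map_sub]
    linarith
  have hd34 : ∀ i : I, 0 ≤ P.coroot' (b i) (lam3 - lam4) := by
    intro i
    have h := hdom34 (P.reflection (b i)) (P.reflection_mem_weylGroup (b i)) i
    rw [map_add, P.reflection_apply, map_sub, map_smul, pair2 i, smul_eq_mul] at h
    rw [map_sub]
    linarith
  have hd24 : ∀ i : I, 0 ≤ P.coroot' (b i) (lam2 - lam4) := by
    intro i
    have h1 := hineq (b i) (posIdx_simple (P := P) (b := b) i)
    have h2 := hd12 i
    have h3 := hd34 i
    rw [abs_of_nonneg h2, abs_of_nonneg h3] at h1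
    have h5 : lam3 = lam1 + lam2 - lam4 := eq_sub_of_add_eq hsum.symm
    have h4 : (lam3 - lam4) - (lam1 - lam2) = (2:ℝ) • (lam2 - lam4) := by
      rw [h5, two_smul]
      abel
    have h6 : P.coroot' (b i) (lam3 - lam4) - P.coroot' (b i) (lam1 - lam2)
        = 2 * P.coroot' (b i) (lam2 - lam4) := by
      have h7 := congrArg (P.coroot' (b i)) h4
      rw [map_sub, map_smul, smul_eq_mul] at h7
      linarith
    linarith
  have hdecomp : lam3 + w lam4 = lam1 + ((lam2 - lam4) + w lam4) := by
    have h5 : lam3 = lam1 + lam2 - lam4 := eq_sub_of_add_eq hsum.symm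
    rw [h5]
    abel
  -- finiteness and the ambient Euclidean space
  haveI : Module.Finite ℝ M := by
    have h1 : Module.Finite ℝ (P.rootSpan ℝ) :=
      Module.Finite.span_of_finite ℝ (Set.finite_range P.root)
    exact Module.Finite.of_surjective ((P.rootSpan ℝ)).subtype
      (by rw [← LinearMap.range_eq_top, Submodule.range_subtype]; exact P.span_eq_top)
  let e : M ≃ₗ[ℝ] EuclideanSpace ℝ (Fin (Module.finrank ℝ M)) :=
    (Module.finBasis ℝ M).equivFun.trans
      (WithLp.linearEquiv 2 ℝ (Fin (Module.finrank ℝ M) → ℝ)).symm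
  set S : Set M := {x : M | ∃ u ∈ P.weylGroup, x = lam1 + u lam2} with hS
  have hSfin : S.Finite := by
    haveI := finite_weylGroup (P := P)
    have hSr : S = Set.range (fun u : P.weylGroup => lam1 + (u : M ≃ₗ[ℝ] M) lam2) := by
      ext x
      constructor
      · rintro ⟨u, hu, rfl⟩
        exact ⟨⟨u, hu⟩, rfl⟩
      · rintro ⟨u, rfl⟩
        exact ⟨(u : M ≃ₗ[ℝ] M), u.2, rfl⟩
    rw [hSr]
    exact Set.finite_range _
  rw [RootSystem.orbitPolytope]
  by_contra hnot
  have himgEq : convexHull ℝ (e '' S) = e '' convexHull ℝ S := by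
    have h9 := e.toLinearMap.image_convexHull S
    simpa using h9.symm
  have himg : e (lam3 + w lam4) ∉ convexHull ℝ (e '' S) := by
    rw [himgEq]
    rintro ⟨q, hq, heq⟩
    exact hnot (by rwa [← e.injective heq])
  obtain ⟨f, c, hfa, hfp⟩ := geometric_hahn_banach_closed_point
    (convex_convexHull ℝ _) ((hSfin.image e).isClosed_convexHull (𝕜 := ℝ)) himg
  set F : M →ₗ[ℝ] ℝ := f.toLinearMap.comp e.toLinearMap with hF
  have hFS : ∀ a ∈ S, F a < c := fun a ha =>
    hfa (e a) (subset_convexHull ℝ _ (Set.mem_image_of_mem e ha))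
  have hFp : c < F (lam3 + w lam4) := hfp
  obtain ⟨u₀, hu₀mem, hu₀⟩ := exists_dominant_translate hb hred F
  have hest1 : F (w lam4) ≤ F (u₀ lam4) :=
    key_estimate hb hred hcrys F hu₀mem hu₀ hw (fun i => h4 i)
  have hest2 : F (lam2 - lam4) ≤ F (u₀ (lam2 - lam4)) := by
    have h10 := key_estimate hb hred hcrys F hu₀mem hu₀ (one_mem _) hd24
    have h11 : (1 : M ≃ₗ[ℝ] M) (lam2 - lam4) = lam2 - lam4 := rfl
    rwa [h11] at h10
  have hS1 : lam1 + u₀ lam2 ∈ S := ⟨u₀, hu₀mem, rfl⟩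
  have hlt := hFS _ hS1
  have hp : F (lam3 + w lam4) = F lam1 + (F (lam2 - lam4) + F (w lam4)) := by
    rw [hdecomp, map_add, map_add]
  have hq2 : F (lam1 + u₀ lam2) = F lam1 + (F (u₀ (lam2 - lam4)) + F (u₀ lam4)) := by
    have h12 : u₀ (lam2 - lam4) + u₀ lam4 = u₀ lam2 := by
      rw [← map_add]
      congr 1
      abel
    rw [map_add, ← h12, map_add]
  rw [hp] at hFp
  rw [hq2] at hlt
  linarith
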